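/- In the Surprise Exam Beth-Kripke model, the teacher's announcement formula φ₀ (exactly one of p₁, p₂, p₃) is satisfied, and additionally (M,s) ⊨ ⟨p₁⟩⊤ ∧ ⟨¬p₁⟩⊤ ∧ ⟨¬p₁⟩⟨p₂⟩⊤ ∧ ⟨¬p₁⟩⟨¬p₂⟩⊤ ∧ ⟨¬p₁⟩⟨¬p₂⟩⟨p₃⟩⊤, yet (M,s) ⊭ p₃ and (M,s) ⊭ ¬p₃. -/

import Mathlib

/-- A path through `α`: a maximal chain containing `α`. -/
def IsPath {Q : Type} [PartialOrder Q] (α : Q) (P : Set Q) : Prop :=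
  α ∈ P ∧ IsChain (· ≤ ·) P ∧ ∀ P' : Set Q, IsChain (· ≤ ·) P' → P ⊆ P' → P' = P

/-- A bar for `α`: a set meeting every path through `α`. -/
def IsBar {Q : Type} [PartialOrder Q] (α : Q) (B : Set Q) : Prop :=
  ∀ P : Set Q, IsPath α P → (B ∩ P).Nonempty

/-- Epistemic formulas over agents `Ag` and atoms `At`. -/
inductive EForm (Ag At : Type) : Type
  | atom : At → EForm Ag At
  | and  : EForm Ag At → EForm Ag At → EForm Ag At
  | or   : EForm Ag At → EForm Ag At → EForm Ag At
  | imp  : EForm Ag At → EForm Ag At → EForm Ag At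
  | neg  : EForm Ag At → EForm Ag At
  | know : Ag → EForm Ag At → EForm Ag At

/-- A Beth-Kripke model: a set of pointed (rooted) Beth worlds with accessibility
relations between worlds. -/
structure BK (Ag At : Type) where
  S : Type
  Node : S → Type
  [ord : ∀ s, PartialOrder (Node s)]
  root : ∀ s, Node s
  root_le : ∀ (s : S) (β : Node s), root s ≤ β
  F : ∀ s, Node s → Set At
  F_mono : ∀ {s : S} {a b : Node s}, a ≤ b → F s a ⊆ F s b
  acc : Ag → S → S → Prop

attribute [instance] BK.ord

/-- Epistemic Beth forcing `α ⊩_M φ` at node `α` of world `s`. -/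
def BK.force {Ag At : Type} (M : BK Ag At) : EForm Ag At → ∀ s : M.S, M.Node s → Prop
  | .atom p, s, α => ∃ B, IsBar α B ∧ ∀ β ∈ B, p ∈ M.F s β
  | .and A B, s, α => M.force A s α ∧ M.force B s α
  | .or A B, s, α => ∃ Bb, IsBar α Bb ∧ ∀ β ∈ Bb, M.force A s β ∨ M.force B s β
  | .imp A B, s, α => ∀ β, α ≤ β → M.force A s β → M.force B s β
  | .neg A, s, α => ∀ β, α ≤ β → ¬ M.force A s β
  | .know i A, s, _ => ∀ t, M.acc i s t → ∀ β : M.Node t, M.force A t β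

/-- The model `M|_φ` obtained by publicly announcing `φ`: keep only worlds whose
root does not force `¬φ`, and within each world only the nodes not forcing `¬φ`. -/
def BK.announce {Ag At : Type} (M : BK Ag At) (φ : EForm Ag At) : BK Ag At where
  S := {s : M.S // ¬ M.force (.neg φ) s (M.root s)}
  Node s := {α : M.Node s.1 // ¬ M.force (.neg φ) s.1 α}
  root s := ⟨M.root s.1, s.2⟩
  root_le s β := Subtype.mk_le_mk.mpr (M.root_le s.1 β.1)
  F s α := M.F s.1 α.1
  F_mono h := M.F_mono (Subtype.mk_le_mk.mp h)
  acc i s t := M.acc i s.1 t.1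

/-- Four nodes: a root `a` with three incomparable successors `b`, `c`, `d`. -/
inductive N4 : Type
  | a | b | c | d
deriving DecidableEq

instance : PartialOrder N4 where
  le x y := x = y ∨ x = N4.a
  le_refl _ := Or.inl rfl
  le_trans x y z h1 h2 := by
    rcases h1 with rfl | rfl
    · exact h2
    · exact Or.inr rfl
  le_antisymm x y h1 h2 := by
    rcases h1 with rfl | rfl
    · rfl
    · rcases h2 with rfl | rfl <;> rfl

/-- The Surprise Exam Beth-Kripke model: a single world (one student agent,
reflexive accessibility) whose Beth world has root `a` with empty valuation and
three successors `b`, `c`, `d` making `p₁`, `p₂`, `p₃` (atoms `0`, `1`, `2`)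
true respectively. -/
def MSEP : BK Unit (Fin 3) where
  S := Unit
  Node _ := N4
  root _ := N4.a
  root_le _ β := Or.inr rfl
  F _ n := match n with
    | .a => ∅
    | .b => {0}
    | .c => {1}
    | .d => {2}
  F_mono h := by
    rcases h with rfl | rfl
    · exact fun z hz => hz
    · exact fun z hz => hz.elim
  acc _ _ _ := True

/-- `p₁`: the teacher likes Wednesday. -/
def pw : EForm Unit (Fin 3) := .atom 0
/-- `p₂`: the teacher likes Thursday. -/
def pt : EForm Unit (Fin 3) := .atom 1
/-- `p₃`: the teacher likes Friday. -/
def pf : EForm Unit (Fin 3) := .atom 2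

/-- `φ₀`: the teacher likes exactly one of the three days. -/
def phi0 : EForm Unit (Fin 3) :=
  .and (.or pw (.or pt pf))
    (.and (.neg (.and pw pt)) (.and (.neg (.and pw pf)) (.neg (.and pt pf))))

section Helpers

lemma isBar_singleton {Q : Type} [PartialOrder Q] (α : Q) : IsBar α {α} :=
  fun P hP => ⟨α, rfl, hP.1⟩

lemma force_atom_of_mem {Ag At : Type} (M : BK Ag At) {p : At} {s : M.S} {α : M.Node s}
    (h : p ∈ M.F s α) : M.force (.atom p) s α :=
  ⟨{α}, isBar_singleton α, fun β hβ => by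
    rw [Set.mem_singleton_iff] at hβ; subst hβ; exact h⟩

lemma not_force_atom {Ag At : Type} (M : BK Ag At) {p : At} {s : M.S} {α : M.Node s}
    (P : Set (M.Node s)) (hP : IsPath α P) (h : ∀ β ∈ P, p ∉ M.F s β) :
    ¬ M.force (.atom p) s α := by
  rintro ⟨B, hB, hall⟩
  obtain ⟨β, hβB, hβP⟩ := hB P hP
  exact h β hβP (hall β hβB)

lemma isPath_pair {Q : Type} [PartialOrder Q] {a x : Q} (hax : a ≤ x)
    (h : ∀ z : Q, (z ≤ x ∨ x ≤ z) → z = a ∨ z = x) :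
    IsPath x {a, x} ∧ IsPath a {a, x} := by
  have chain : IsChain (· ≤ ·) ({a, x} : Set Q) := by
    intro u hu v hv huv
    simp only [Set.mem_insert_iff, Set.mem_singleton_iff] at hu hv
    rcases hu with rfl | rfl <;> rcases hv with rfl | rfl
    · exact absurd rfl huv
    · exact Or.inl hax
    · exact Or.inr hax
    · exact absurd rfl huv
  have maxi : ∀ P' : Set Q, IsChain (· ≤ ·) P' → {a, x} ⊆ P' → P' = {a, x} := by
    intro P' hc hsub
    refine Set.Subset.antisymm ?_ hsub
    intro z hz
    by_cases hzx : z = x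
    · exact Or.inr hzx
    · have hcomp := hc hz (hsub (Or.inr rfl)) hzx
      rcases h z hcomp with rfl | rfl
      · exact Or.inl rfl
      · exact Or.inr rfl
  exact ⟨⟨Or.inr rfl, chain, maxi⟩, ⟨Or.inl rfl, chain, maxi⟩⟩

lemma N4.comp {x : N4} (hx : x ≠ N4.a) :
    ∀ z : N4, (z ≤ x ∨ x ≤ z) → z = N4.a ∨ z = x := by
  intro z h
  rcases h with h | h
  · rcases h with rfl | rfl
    · exact Or.inr rfl
    · exact Or.inl rfl
  · rcases h with rfl | h
    · exact Or.inr rfl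
    · exact absurd h hx

end Helpers

lemma comp_subtype {Q : Type} [PartialOrder Q] {p : Q → Prop} {a x : Q}
    (h : ∀ z : Q, (z ≤ x ∨ x ≤ z) → z = a ∨ z = x) (ha : p a) (hx : p x) :
    ∀ z : {q // p q}, (z ≤ ⟨x, hx⟩ ∨ (⟨x, hx⟩ : {q // p q}) ≤ z) →
      z = ⟨a, ha⟩ ∨ z = ⟨x, hx⟩ := by
  intro z hz
  rcases h z.1 (hz.imp Subtype.coe_le_coe.mpr Subtype.coe_le_coe.mpr) with h' | h'
  · exact Or.inl (Subtype.ext h')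
  · exact Or.inr (Subtype.ext h')


/-- in the Surprise Exam model, `φ₀` is satisfied; moreover
`(M,s) ⊨ ⟨p₁⟩⊤ ∧ ⟨¬p₁⟩⊤ ∧ ⟨¬p₁⟩⟨p₂⟩⊤ ∧ ⟨¬p₁⟩⟨¬p₂⟩⊤ ∧ ⟨¬p₁⟩⟨¬p₂⟩⟨p₃⟩⊤`
(each announcement step is executable: the relevant root does not force the
negation of the announced formula), yet `(M,s) ⊭ p₃` and `(M,s) ⊭ ¬p₃`. -/
theorem surprise_exam :
    MSEP.force phi0 () (MSEP.root ()) ∧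
    -- ⟨p₁⟩⊤
    ¬ MSEP.force (.neg pw) () (MSEP.root ()) ∧
    -- ⟨¬p₁⟩⊤, and the further announcements after announcing ¬p₁
    (∃ h1 : ¬ MSEP.force (.neg (.neg pw)) () (MSEP.root ()),
      -- ⟨¬p₁⟩⟨p₂⟩⊤
      ¬ (MSEP.announce (.neg pw)).force (.neg pt) ⟨(), h1⟩
          ((MSEP.announce (.neg pw)).root ⟨(), h1⟩) ∧
      -- ⟨¬p₁⟩⟨¬p₂⟩⊤, and then ⟨¬p₁⟩⟨¬p₂⟩⟨p₃⟩⊤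
      ∃ h2 : ¬ (MSEP.announce (.neg pw)).force (.neg (.neg pt)) ⟨(), h1⟩
          ((MSEP.announce (.neg pw)).root ⟨(), h1⟩),
        ¬ ((MSEP.announce (.neg pw)).announce (.neg pt)).force (.neg pf)
            ⟨⟨(), h1⟩, h2⟩
            (((MSEP.announce (.neg pw)).announce (.neg pt)).root ⟨⟨(), h1⟩, h2⟩)) ∧
    -- (M,s) ⊭ p₃ and (M,s) ⊭ ¬p₃
    ¬ MSEP.force pf () (MSEP.root ()) ∧
    ¬ MSEP.force (.neg pf) () (MSEP.root ()) := by
  -- paths in N4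
  obtain ⟨pb_b, pb_a⟩ := isPath_pair (Or.inr rfl : (N4.a : N4) ≤ N4.b) (N4.comp (by decide))
  obtain ⟨pc_c, pc_a⟩ := isPath_pair (Or.inr rfl : (N4.a : N4) ≤ N4.c) (N4.comp (by decide))
  obtain ⟨pd_d, pd_a⟩ := isPath_pair (Or.inr rfl : (N4.a : N4) ≤ N4.d) (N4.comp (by decide))
  -- atoms absent along paths
  have hF0c : ∀ β ∈ ({N4.a, N4.c} : Set N4), (0 : Fin 3) ∉ MSEP.F () β := by
    rintro β (rfl | rfl) h
    · exact h
    · exact (by decide : (0:Fin 3) ≠ 1) h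
  have hF0d : ∀ β ∈ ({N4.a, N4.d} : Set N4), (0 : Fin 3) ∉ MSEP.F () β := by
    rintro β (rfl | rfl) h
    · exact h
    · exact (by decide : (0:Fin 3) ≠ 2) h
  have hF1b : ∀ β ∈ ({N4.a, N4.b} : Set N4), (1 : Fin 3) ∉ MSEP.F () β := by
    rintro β (rfl | rfl) h
    · exact h
    · exact (by decide : (1:Fin 3) ≠ 0) h
  have hF1d : ∀ β ∈ ({N4.a, N4.d} : Set N4), (1 : Fin 3) ∉ MSEP.F () β := by
    rintro β (rfl | rfl) h
    · exact h
    · exact (by decide : (1:Fin 3) ≠ 2) h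
  have hF2b : ∀ β ∈ ({N4.a, N4.b} : Set N4), (2 : Fin 3) ∉ MSEP.F () β := by
    rintro β (rfl | rfl) h
    · exact h
    · exact (by decide : (2:Fin 3) ≠ 0) h
  have hF2c : ∀ β ∈ ({N4.a, N4.c} : Set N4), (2 : Fin 3) ∉ MSEP.F () β := by
    rintro β (rfl | rfl) h
    · exact h
    · exact (by decide : (2:Fin 3) ≠ 1) h
  -- forced / not-forced atoms in MSEP
  have f0b : MSEP.force pw () N4.b := force_atom_of_mem MSEP rfl
  have f1c : MSEP.force pt () N4.c := force_atom_of_mem MSEP rfl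
  have f2d : MSEP.force pf () N4.d := force_atom_of_mem MSEP rfl
  have n0a : ¬ MSEP.force pw () N4.a := not_force_atom MSEP _ pc_a hF0c
  have n0c : ¬ MSEP.force pw () N4.c := not_force_atom MSEP _ pc_c hF0c
  have n0d : ¬ MSEP.force pw () N4.d := not_force_atom MSEP _ pd_d hF0d
  have n1a : ¬ MSEP.force pt () N4.a := not_force_atom MSEP _ pb_a hF1b
  have n1b : ¬ MSEP.force pt () N4.b := not_force_atom MSEP _ pb_b hF1b
  have n1d : ¬ MSEP.force pt () N4.d := not_force_atom MSEP _ pd_d hF1d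
  have n2a : ¬ MSEP.force pf () N4.a := not_force_atom MSEP _ pb_a hF2b
  have n2b : ¬ MSEP.force pf () N4.b := not_force_atom MSEP _ pb_b hF2b
  have n2c : ¬ MSEP.force pf () N4.c := not_force_atom MSEP _ pc_c hF2c
  -- neg pw holds at c and d
  have negpw_c : MSEP.force (.neg pw) () N4.c := by
    intro β hβ
    rcases hβ with rfl | h
    · exact n0c
    · exact absurd h (by decide)
  have negpw_d : MSEP.force (.neg pw) () N4.d := by
    intro β hβ
    rcases hβ with rfl | h
    · exact n0d
    · exact absurd h (by decide)
  have negpt_d : MSEP.force (.neg pt) () N4.d := by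
    intro β hβ
    rcases hβ with rfl | h
    · exact n1d
    · exact absurd h (by decide)
  -- the bar {b,c,d} for a
  have barBCD : IsBar N4.a ({N4.b, N4.c, N4.d} : Set N4) := by
    intro P hP
    by_contra hemp
    rw [Set.not_nonempty_iff_eq_empty] at hemp
    have hsub : ∀ z ∈ P, z = N4.a := by
      intro z hz
      have hz' := fun hm => Set.eq_empty_iff_forall_notMem.mp hemp z ⟨hm, hz⟩
      cases z
      · rfl
      · exact absurd (by simp) hz'
      · exact absurd (by simp) hz'
      · exact absurd (by simp) hz'
    have hchain : IsChain (· ≤ ·) (insert N4.b P) := by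
      intro u hu v hv huv
      rcases hu with rfl | hu <;> rcases hv with rfl | hv
      · exact absurd rfl huv
      · have := hsub v hv; subst this; exact Or.inr (Or.inr rfl)
      · have := hsub u hu; subst this; exact Or.inl (Or.inr rfl)
      · exact absurd ((hsub u hu).trans (hsub v hv).symm) huv
    have heq := hP.2.2 _ hchain (Set.subset_insert _ _)
    have hbP : N4.b ∈ P := heq ▸ Set.mem_insert _ _
    exact Set.eq_empty_iff_forall_notMem.mp hemp N4.b ⟨by simp, hbP⟩
  -- phi0 at the root
  have hphi0 : MSEP.force phi0 () (MSEP.root ()) := by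
    refine ⟨⟨{N4.b, N4.c, N4.d}, barBCD, ?_⟩, ?_, ?_, ?_⟩
    · rintro β (rfl | rfl | rfl)
      · exact Or.inl f0b
      · exact Or.inr ⟨{N4.c}, @isBar_singleton _ (MSEP.ord ()) _, by rintro β rfl; exact Or.inl f1c⟩
      · exact Or.inr ⟨{N4.d}, @isBar_singleton _ (MSEP.ord ()) _, by rintro β rfl; exact Or.inr f2d⟩
    · rintro β _ ⟨hβ1, hβ2⟩
      cases β
      · exact n0a hβ1
      · exact n1b hβ2
      · exact n0c hβ1
      · exact n0d hβ1
    · rintro β _ ⟨hβ1, hβ2⟩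
      cases β
      · exact n0a hβ1
      · exact n2b hβ2
      · exact n0c hβ1
      · exact n0d hβ1
    · rintro β _ ⟨hβ1, hβ2⟩
      cases β
      · exact n1a hβ1
      · exact n1b hβ1
      · exact n2c hβ2
      · exact n1d hβ1
  -- node membership proofs for the first announcement
  have hc : ¬ MSEP.force (.neg (.neg pw)) () N4.c := fun h => h N4.c (Or.inl rfl) negpw_c
  have hd : ¬ MSEP.force (.neg (.neg pw)) () N4.d := fun h => h N4.d (Or.inl rfl) negpw_d
  have h1 : ¬ MSEP.force (.neg (.neg pw)) () (MSEP.root ()) :=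
    fun h => h N4.c (Or.inr rfl) negpw_c
  refine ⟨hphi0, fun h => h N4.b (Or.inr rfl) f0b, ⟨h1, ?_, ?_⟩,
    not_force_atom MSEP _ pb_a hF2b, fun h => h N4.d (Or.inr rfl) f2d⟩
  · -- ¬ M1 ⊨ neg pt at root
    intro h
    exact h ⟨N4.c, hc⟩ (Subtype.mk_le_mk.mpr (Or.inr rfl)) (force_atom_of_mem _ rfl)
  · -- M1 facts
    have negpt_dd : (MSEP.announce (.neg pw)).force (.neg pt) ⟨(), h1⟩ ⟨N4.d, hd⟩ := by
      intro β hβ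
      obtain ⟨path_d, _⟩ := isPath_pair (a := (⟨N4.a, h1⟩ : {α : N4 // ¬ MSEP.force (.neg (.neg pw)) () α}))
        (Subtype.mk_le_mk.mpr (Or.inr rfl))
        (comp_subtype (N4.comp (by decide)) h1 hd)
      have hv : β = ⟨N4.d, hd⟩ := by
        rcases Subtype.coe_le_coe.mpr hβ with h' | h'
        · exact (Subtype.ext h'.symm)
        · exact absurd h' (fun hh => N4.noConfusion hh)
      subst hv
      refine not_force_atom _ _ path_d ?_
      rintro γ (rfl | rfl) hmem
      · exact hmem
      · exact (by decide : (1:Fin 3) ≠ 2) hmem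
    have h2 : ¬ (MSEP.announce (.neg pw)).force (.neg (.neg pt)) ⟨(), h1⟩
        ((MSEP.announce (.neg pw)).root ⟨(), h1⟩) :=
      fun h => h ⟨N4.d, hd⟩ (Subtype.mk_le_mk.mpr (Or.inr rfl)) negpt_dd
    have hdd2 : ¬ (MSEP.announce (.neg pw)).force (.neg (.neg pt)) ⟨(), h1⟩ ⟨N4.d, hd⟩ :=
      fun h => h ⟨N4.d, hd⟩ (@le_rfl _ ((MSEP.announce (.neg pw)).ord ⟨(), h1⟩).toPreorder _) negpt_dd
    refine ⟨h2, fun h => ?_⟩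
    exact h ⟨⟨N4.d, hd⟩, hdd2⟩
      (Subtype.mk_le_mk.mpr (Subtype.mk_le_mk.mpr (Or.inr rfl)))
      (force_atom_of_mem _ rfl)
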